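/- The number of Type 2 sequences of weight n equals the number of pairs (λ, μ) of partitions into distinct parts with |λ| + |μ| = n and max(λ) = max(μ); and ũ(n) = 2·(number of Type 1 sequences of weight n) + (number of Type 2 sequences of weight n). -/

import Mathlib

/-- A binary word avoids the pattern `x xᴿ x`: no factor `u ++ u.reverse ++ u` with `u` nonempty. -/
def AvoidsP (w : List Bool) : Prop :=
  ¬ ∃ u : List Bool, u ≠ [] ∧ (u ++ u.reverse ++ u) <:+: w

/-- A binary word avoids the factors `000` and `111`. -/
def AvoidsCubes (w : List Bool) : Prop :=
  ¬ ([false, false, false] <:+: w) ∧ ¬ ([true, true, true] <:+: w)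

/-- Alternating word: a prefix of `0101…` or `1010…`. -/
def Alt (A : List Bool) : Prop := A.Chain' (· ≠ ·)

/-- Glue the blocks `A_0 a_1 a_1 A_1 a_2 a_2 ⋯ a_k a_k A_k`. -/
def glue : List (List Bool) → List Bool → List Bool
  | [], _ => []
  | [A], _ => A
  | A :: As, [] => A ++ glue As []
  | A :: As, b :: bs => A ++ [b, b] ++ glue As bs

/-- `IsFact As bs w` : `w = A_0 b_1 b_1 A_1 ⋯ b_k b_k A_k` with all `A_i` alternating. -/
def IsFact (As : List (List Bool)) (bs : List Bool) (w : List Bool) : Prop :=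
  As.length = bs.length + 1 ∧ (∀ A ∈ As, Alt A) ∧ w = glue As bs

/-- Middle and final entries of the associated sequence: `n_i = |a_i A_i a_{i+1}|`, `n_k = |a_k A_k|`. -/
def seqMid : List (List Bool) → List ℕ
  | [] => []
  | [A] => [A.length + 1]
  | A :: As => (A.length + 2) :: seqMid As

/-- The sequence `f(w) = (n_0, …, n_k)` associated to the canonical factorization. -/
def seqOf : List (List Bool) → List ℕ
  | [] => []
  | [A] => if A.isEmpty then [] else [A.length]
  | A :: As => (A.length + 1) :: seqMid As

/-- No index `j` with `d_{j-1} ≥ d_j` and `d_j ≤ d_{j+1}`. -/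
def NoValley (d : List ℕ) : Prop :=
  ∀ j : ℕ, 1 ≤ j → j + 1 < d.length →
    ¬ (d.getD (j - 1) 0 ≥ d.getD j 0 ∧ d.getD j 0 ≤ d.getD (j + 1) 0)

/-- Membership in the set `X` of sequences. -/
def InX (d : List ℕ) : Prop := (∀ x ∈ d, 0 < x) ∧ NoValley d

/-- Type 1 (strongly unimodal): strictly increasing to a unique maximum, then strictly decreasing. -/
def Type1 (d : List ℕ) : Prop :=
  (∀ x ∈ d, 0 < x) ∧ d ≠ [] ∧ ∃ j < d.length,
    (∀ i : ℕ, i + 1 ≤ j → d.getD i 0 < d.getD (i + 1) 0) ∧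
    (∀ i : ℕ, j ≤ i → i + 1 < d.length → d.getD i 0 > d.getD (i + 1) 0)

/-- Type 2: strictly increasing, two equal consecutive maximal terms, then strictly decreasing. -/
def Type2 (d : List ℕ) : Prop :=
  (∀ x ∈ d, 0 < x) ∧ ∃ j, 1 ≤ j ∧ j < d.length ∧
    d.getD (j - 1) 0 = d.getD j 0 ∧
    (∀ i : ℕ, i + 1 ≤ j - 1 → d.getD i 0 < d.getD (i + 1) 0) ∧
    (∀ i : ℕ, j ≤ i → i + 1 < d.length → d.getD i 0 > d.getD (i + 1) 0)

/-- `v n` : number of sequences in `X` of weight `n`. -/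
noncomputable def v (n : ℕ) : ℕ := Nat.card {d : List ℕ // InX d ∧ d.sum = n}

/-- A strict partition, viewed as a finite set of positive integers. -/
def StrictPartition (s : Finset ℕ) : Prop := 0 ∉ s

/-- `utilde n` : number of pairs of partitions into distinct parts of total weight `n`. -/
noncomputable def utilde (n : ℕ) : ℕ :=
  Nat.card {p : Finset ℕ × Finset ℕ //
    StrictPartition p.1 ∧ StrictPartition p.2 ∧ p.1.sum id + p.2.sum id = n}

/-- `c n` : number of binary words of length `n` avoiding `x xᴿ x`. -/
noncomputable def c (n : ℕ) : ℕ := Nat.card {w : List Bool // w.length = n ∧ AvoidsP w}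

/-- The word `(01)^n`. -/
def w01 (n : ℕ) : List Bool := (List.replicate n [false, true]).flatten

/-- The word `(10)^n`. -/
def w10 (n : ℕ) : List Bool := (List.replicate n [true, false]).flatten

namespace S16
open List

def runLen : List ℕ → ℕ
  | [] => 0
  | [_] => 1
  | x :: y :: t => if x < y then runLen (y :: t) + 1 else 1

lemma runLen_eq_length : ∀ (a : List ℕ), a.Chain' (· < ·) → runLen a = a.length
  | [], _ => rfl
  | [_], _ => rfl
  | x :: y :: t, h => by
      rw [List.Chain', List.isChain_cons_cons] at h
      simp [runLen, if_pos h.1, runLen_eq_length (y :: t) h.2]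

lemma runLen_append : ∀ (a : List ℕ) (y : ℕ) (t : List ℕ), a.Chain' (· < ·) → ∀ (hne : a ≠ []),
    ¬ a.getLast hne < y → runLen (a ++ y :: t) = a.length
  | [], _, _, _, hne, _ => absurd rfl hne
  | [x], y, t, _, _, hy => by
      simp only [List.getLast_singleton] at hy
      simp [runLen, if_neg hy]
  | x :: x' :: r, y, t, h, _, hy => by
      rw [List.Chain', List.isChain_cons_cons] at h
      have ih : runLen ((x' :: r) ++ y :: t) = (x' :: r).length :=
        runLen_append (x' :: r) y t h.2 (by simp)
          (by rwa [List.getLast_cons (by simp : x' :: r ≠ [])] at hy)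
      show runLen (x :: x' :: (r ++ y :: t)) = (x :: x' :: r).length
      rw [runLen, if_pos h.1]
      simpa using ih

lemma chain'_getD {R : ℕ → ℕ → Prop} {l : List ℕ} (h : l.Chain' R) (i : ℕ)
    (hi : i + 1 < l.length) : R (l.getD i 0) (l.getD (i + 1) 0) := by
  rw [List.getD_eq_getElem _ _ (by omega), List.getD_eq_getElem _ _ hi]
  simpa using List.isChain_iff_getElem.1 h i (by omega)

lemma chain'_of_getD {R : ℕ → ℕ → Prop} {l : List ℕ}
    (h : ∀ i, i + 1 < l.length → R (l.getD i 0) (l.getD (i + 1) 0)) : l.Chain' R := by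
  rw [List.Chain', List.isChain_iff_getElem]
  intro i hi
  have := h i (by omega)
  rw [List.getD_eq_getElem _ _ (by omega), List.getD_eq_getElem _ _ (by omega)] at this
  simpa using this

lemma getD_take {l : List ℕ} {j i : ℕ} (h : i < j) : (l.take j).getD i 0 = l.getD i 0 := by
  rcases lt_or_ge i l.length with hi | hi
  · rw [List.getD_eq_getElem _ _ (by simp [List.length_take]; omega),
        List.getD_eq_getElem _ _ hi, List.getElem_take]
  · rw [List.getD_eq_default _ _ (by simp [List.length_take]; omega),
        List.getD_eq_default _ _ hi]

lemma getD_drop {l : List ℕ} {j i : ℕ} : (l.drop j).getD i 0 = l.getD (j + i) 0 := by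
  rcases lt_or_ge (j + i) l.length with hi | hi
  · rw [List.getD_eq_getElem _ _ (by simp [List.length_drop]; omega),
        List.getD_eq_getElem _ _ hi, List.getElem_drop]
  · rw [List.getD_eq_default _ _ (by simp [List.length_drop]; omega),
        List.getD_eq_default _ _ hi]

lemma getLast?_eq_getD {l : List ℕ} (h : l ≠ []) :
    l.getLast? = some (l.getD (l.length - 1) 0) := by
  rw [List.getLast?_eq_getLast h, List.getLast_eq_getElem,
    List.getD_eq_getElem _ _ (by have := List.length_pos_iff.2 h; omega)]

lemma head?_eq_getD {l : List ℕ} (h : l ≠ []) : l.head? = some (l.getD 0 0) := by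
  cases l with
  | nil => exact absurd rfl h
  | cons a t => simp

lemma runLen_append' (a c : List ℕ) (ha : a.Chain' (· < ·)) (hane : a ≠ []) (hcne : c ≠ [])
    (hy : ¬ a.getD (a.length - 1) 0 < c.getD 0 0) : runLen (a ++ c) = a.length := by
  cases c with
  | nil => exact absurd rfl hcne
  | cons y t =>
      refine runLen_append a y t ha hane ?_
      have : a.getLast hane = a.getD (a.length - 1) 0 := by
        rw [List.getLast_eq_getElem, List.getD_eq_getElem _ _
          (by have := List.length_pos_iff.2 hane; omega)]
      rw [this]
      simpa using hy

lemma sort_chain' (s : Finset ℕ) : (s.sort (· ≤ ·)).Chain' (· < ·) :=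
  List.isChain_iff_pairwise.2 s.sortedLT_sort.pairwise

lemma chain'_lt_nodup {l : List ℕ} (h : l.Chain' (· < ·)) : l.Nodup :=
  (List.isChain_iff_pairwise.1 h).nodup

lemma sort_toFinset_self {l : List ℕ} (h : l.Chain' (· < ·)) :
    l.toFinset.sort (· ≤ ·) = l :=
  (List.toFinset_sort _ (chain'_lt_nodup h)).2
    ((List.isChain_iff_pairwise.1 h).imp le_of_lt)

lemma sum_sort (s : Finset ℕ) : (s.sort (· ≤ ·)).sum = s.sum id := by
  rw [(Finset.sort_perm_toList s (· ≤ ·)).sum_eq, Finset.sum_toList]; rfl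

lemma sort_ne_nil {s : Finset ℕ} (h : s.Nonempty) : s.sort (· ≤ ·) ≠ [] := by
  intro h0
  have := Finset.length_sort (α := ℕ) (· ≤ ·) (s := s)
  rw [h0] at this
  simp only [List.length_nil] at this
  have hc := Finset.card_pos.2 h
  omega

lemma max_eq_getLast? (s : Finset ℕ) : s.max = (s.sort (· ≤ ·)).getLast? := by
  rcases s.eq_empty_or_nonempty with rfl | h
  · simp; rfl
  · rw [List.getLast?_eq_getLast (sort_ne_nil h), ← Finset.coe_max' h]
    have := Finset.max'_eq_sorted_last (s := s) (h := h)
    rw [List.getLast_eq_getElem, this]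
    rfl

def Phi (p : Finset ℕ × Finset ℕ) : List ℕ :=
  p.1.sort (· ≤ ·) ++ (p.2.sort (· ≤ ·)).reverse

def mkPair (d : List ℕ) (k : ℕ) : Finset ℕ × Finset ℕ :=
  ((d.take k).toFinset, ((d.drop k).reverse).toFinset)

lemma sum_Phi (p : Finset ℕ × Finset ℕ) : (Phi p).sum = p.1.sum id + p.2.sum id := by
  simp [Phi, List.sum_append, List.sum_reverse, sum_sort]

lemma pos_Phi {p : Finset ℕ × Finset ℕ} (h1 : StrictPartition p.1) (h2 : StrictPartition p.2) :
    ∀ x ∈ Phi p, 0 < x := by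
  intro x hx
  rcases List.mem_append.1 hx with hx | hx
  · exact Nat.pos_of_ne_zero fun h => h1 (h ▸ (Finset.mem_sort _).1 hx)
  · exact Nat.pos_of_ne_zero fun h =>
      h2 (h ▸ (Finset.mem_sort _).1 (List.mem_reverse.1 hx))

lemma rev_drop_chain' {d : List ℕ} {k : ℕ} (h2 : (d.drop k).Chain' (· > ·)) :
    ((d.drop k).reverse).Chain' (· < ·) := by
  rw [List.Chain', List.isChain_reverse]
  exact h2

lemma mkPair_facts {d : List ℕ} {k : ℕ}
    (hpos : ∀ x ∈ d, 0 < x)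
    (h1 : (d.take k).Chain' (· < ·)) (h2 : (d.drop k).Chain' (· > ·)) :
    StrictPartition (mkPair d k).1 ∧ StrictPartition (mkPair d k).2 ∧
    (mkPair d k).1.sum id + (mkPair d k).2.sum id = d.sum ∧
    Phi (mkPair d k) = d := by
  have s1 : (mkPair d k).1.sort (· ≤ ·) = d.take k := sort_toFinset_self h1
  have s2 : (mkPair d k).2.sort (· ≤ ·) = (d.drop k).reverse :=
    sort_toFinset_self (rev_drop_chain' h2)
  refine ⟨?_, ?_, ?_, ?_⟩
  · intro h0
    exact absurd (hpos 0 (List.mem_of_mem_take (List.mem_toFinset.1 h0))) (lt_irrefl 0)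
  · intro h0
    exact absurd (hpos 0 (List.mem_of_mem_drop (List.mem_reverse.1 (List.mem_toFinset.1 h0))))
      (lt_irrefl 0)
  · rw [← sum_sort, ← sum_sort, s1, s2, List.sum_reverse, List.sum_take_add_sum_drop]
  · rw [Phi, s1, s2, List.reverse_reverse, List.take_append_drop]

lemma mk1_max {d : List ℕ} {k : ℕ} (h1 : (d.take k).Chain' (· < ·))
    (hk : 1 ≤ k) (hk2 : k ≤ d.length) :
    (mkPair d k).1.max = (d.getD (k - 1) 0 : ℕ) := by
  have s1 : (mkPair d k).1.sort (· ≤ ·) = d.take k := sort_toFinset_self h1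
  have hlen : (d.take k).length = k := by simp [List.length_take]; omega
  have hne : d.take k ≠ [] := by
    intro h0; rw [h0] at hlen; simp at hlen; omega
  rw [max_eq_getLast?, s1, getLast?_eq_getD hne, hlen, getD_take (by omega)]
  rfl

lemma mk1_max0 {d : List ℕ} : (mkPair d 0).1.max = ⊥ := by
  simp [mkPair]

lemma mk2_max {d : List ℕ} {k : ℕ} (h2 : (d.drop k).Chain' (· > ·)) (hk : k < d.length) :
    (mkPair d k).2.max = (d.getD k 0 : ℕ) := by
  have s2 : (mkPair d k).2.sort (· ≤ ·) = (d.drop k).reverse :=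
    sort_toFinset_self (rev_drop_chain' h2)
  have hne : d.drop k ≠ [] := by
    intro h0
    have := congrArg List.length h0
    simp at this; omega
  rw [max_eq_getLast?, s2, List.getLast?_reverse, head?_eq_getD hne, getD_drop]
  norm_num
  rfl

lemma mk2_max0 {d : List ℕ} {k : ℕ} (hk : d.length ≤ k) : (mkPair d k).2.max = ⊥ := by
  have : d.drop k = [] := List.drop_eq_nil_of_le hk
  simp [mkPair, this]

lemma type2_glue {a b : List ℕ} (ha : a.Chain' (· < ·)) (hb : b.Chain' (· > ·))
    (hane : a ≠ []) (hbne : b ≠ [])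
    (hpa : ∀ x ∈ a, 0 < x) (hpb : ∀ x ∈ b, 0 < x)
    (hj : a.getD (a.length - 1) 0 = b.getD 0 0) : Type2 (a ++ b) := by
  have hal : 1 ≤ a.length := List.length_pos_iff.2 hane
  have hbl : 1 ≤ b.length := List.length_pos_iff.2 hbne
  have hlen : (a ++ b).length = a.length + b.length := List.length_append
  refine ⟨?_, a.length, hal, by omega, ?_, ?_, ?_⟩
  · intro x hx
    rcases List.mem_append.1 hx with h | h
    exacts [hpa x h, hpb x h]
  · rw [List.getD_append _ _ _ _ (by omega), List.getD_append_right _ _ _ _ (le_refl _),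
      Nat.sub_self]
    exact hj
  · intro i hi
    rw [List.getD_append _ _ _ _ (by omega), List.getD_append _ _ _ _ (by omega)]
    exact chain'_getD ha i (by omega)
  · intro i hi hl
    rw [List.getD_append_right _ _ _ _ (by omega), List.getD_append_right _ _ _ _ (by omega)]
    have he : (i + 1) - a.length = (i - a.length) + 1 := by omega
    rw [he]
    exact chain'_getD hb _ (by omega)

lemma type1_glue_left {a b : List ℕ} (ha : a.Chain' (· < ·)) (hb : b.Chain' (· > ·))
    (hane : a ≠ [])
    (hpa : ∀ x ∈ a, 0 < x) (hpb : ∀ x ∈ b, 0 < x)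
    (hj : b ≠ [] → b.getD 0 0 < a.getD (a.length - 1) 0) : Type1 (a ++ b) := by
  have hal : 1 ≤ a.length := List.length_pos_iff.2 hane
  have hlen : (a ++ b).length = a.length + b.length := List.length_append
  refine ⟨?_, by simp [hane], a.length - 1, by omega, ?_, ?_⟩
  · intro x hx
    rcases List.mem_append.1 hx with h | h
    exacts [hpa x h, hpb x h]
  · intro i hi
    rw [List.getD_append _ _ _ _ (by omega), List.getD_append _ _ _ _ (by omega)]
    exact chain'_getD ha i (by omega)
  · intro i hi hl
    rcases Nat.lt_or_ge i a.length with h1 | h1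
    · have hieq : i = a.length - 1 := by omega
      have hbne : b ≠ [] := by
        intro h0
        have h2 : (a ++ b).length = a.length := by rw [h0]; simp
        omega
      rw [List.getD_append _ _ _ _ (by omega),
        List.getD_append_right _ _ _ _ (by omega)]
      have : i + 1 - a.length = 0 := by omega
      rw [this, hieq]
      exact hj hbne
    · rw [List.getD_append_right _ _ _ _ (by omega),
        List.getD_append_right _ _ _ _ (by omega)]
      have he : (i + 1) - a.length = (i - a.length) + 1 := by omega
      rw [he]
      exact chain'_getD hb _ (by omega)

lemma type1_glue_right {a b : List ℕ} (ha : a.Chain' (· < ·)) (hb : b.Chain' (· > ·))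
    (hbne : b ≠ [])
    (hpa : ∀ x ∈ a, 0 < x) (hpb : ∀ x ∈ b, 0 < x)
    (hj : a ≠ [] → a.getD (a.length - 1) 0 < b.getD 0 0) : Type1 (a ++ b) := by
  have hbl : 1 ≤ b.length := List.length_pos_iff.2 hbne
  have hlen : (a ++ b).length = a.length + b.length := List.length_append
  refine ⟨?_, by simp [hbne], a.length, by omega, ?_, ?_⟩
  · intro x hx
    rcases List.mem_append.1 hx with h | h
    exacts [hpa x h, hpb x h]
  · intro i hi
    rcases Nat.lt_or_ge (i + 1) a.length with h1 | h1
    · rw [List.getD_append _ _ _ _ (by omega), List.getD_append _ _ _ _ (by omega)]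
      exact chain'_getD ha i (by omega)
    · have hane : a ≠ [] := by
        intro h0; rw [h0] at hi; simp at hi
      have hieq : i = a.length - 1 := by omega
      rw [List.getD_append _ _ _ _ (by omega),
        List.getD_append_right _ _ _ _ (by omega)]
      have : i + 1 - a.length = 0 := by omega
      rw [this, hieq]
      exact hj hane
  · intro i hi hl
    rw [List.getD_append_right _ _ _ _ (by omega),
      List.getD_append_right _ _ _ _ (by omega)]
    have he : (i + 1) - a.length = (i - a.length) + 1 := by omega
    rw [he]
    exact chain'_getD hb _ (by omega)

lemma type2_mk {d : List ℕ} (h : Type2 d) :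
    StrictPartition (mkPair d (runLen d)).1 ∧ StrictPartition (mkPair d (runLen d)).2 ∧
    (mkPair d (runLen d)).1.sum id + (mkPair d (runLen d)).2.sum id = d.sum ∧
    Phi (mkPair d (runLen d)) = d ∧
    (mkPair d (runLen d)).1.max = (mkPair d (runLen d)).2.max := by
  obtain ⟨hpos, j, hj1, hj2, heq, hinc, hdec⟩ := h
  have hlt : (d.take j).length = j := by simp [List.length_take]; omega
  have hld : (d.drop j).length = d.length - j := by simp
  have htake : (d.take j).Chain' (· < ·) := by
    apply chain'_of_getD
    intro i hi
    rw [hlt] at hi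
    rw [getD_take (by omega), getD_take (by omega)]
    exact hinc i (by omega)
  have hdrop : (d.drop j).Chain' (· > ·) := by
    apply chain'_of_getD
    intro i hi
    rw [hld] at hi
    rw [getD_drop, getD_drop]
    have := hdec (j + i) (by omega) (by omega)
    have he : j + (i + 1) = (j + i) + 1 := by omega
    rw [he]
    exact this
  have hrun : runLen d = j := by
    have := runLen_append' (d.take j) (d.drop j) htake
      (by intro h0; rw [h0] at hlt; simp at hlt; omega)
      (by intro h0; rw [h0] at hld; simp at hld; omega)
      (by rw [hlt, getD_take (by omega), getD_drop]
          simp only [Nat.add_zero]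
          rw [heq]
          exact lt_irrefl _)
    rwa [List.take_append_drop, hlt] at this
  rw [hrun]
  obtain ⟨f1, f2, f3, f4⟩ := mkPair_facts hpos htake hdrop
  refine ⟨f1, f2, f3, f4, ?_⟩
  rw [mk1_max htake (by omega) (by omega), mk2_max hdrop (by omega)]
  exact congrArg _ heq

lemma type1_mk {d : List ℕ} (h : Type1 d) :
    ∃ j, runLen d = j + 1 ∧ j < d.length ∧
    (StrictPartition (mkPair d (j+1)).1 ∧ StrictPartition (mkPair d (j+1)).2 ∧
      (mkPair d (j+1)).1.sum id + (mkPair d (j+1)).2.sum id = d.sum ∧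
      Phi (mkPair d (j+1)) = d ∧
      (mkPair d (j+1)).2.max < (mkPair d (j+1)).1.max) ∧
    (StrictPartition (mkPair d j).1 ∧ StrictPartition (mkPair d j).2 ∧
      (mkPair d j).1.sum id + (mkPair d j).2.sum id = d.sum ∧
      Phi (mkPair d j) = d ∧
      (mkPair d j).1.max < (mkPair d j).2.max) := by
  obtain ⟨hpos, hne, j, hj, hinc, hdec⟩ := h
  have hdl : 1 ≤ d.length := List.length_pos_iff.2 hne
  have hlt1 : (d.take (j+1)).length = j + 1 := by simp [List.length_take]; omega
  have hlt0 : (d.take j).length = j := by simp [List.length_take]; omega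
  have htake1 : (d.take (j+1)).Chain' (· < ·) := by
    apply chain'_of_getD
    intro i hi
    rw [hlt1] at hi
    rw [getD_take (by omega), getD_take (by omega)]
    exact hinc i (by omega)
  have htake0 : (d.take j).Chain' (· < ·) := by
    apply chain'_of_getD
    intro i hi
    rw [hlt0] at hi
    rw [getD_take (by omega), getD_take (by omega)]
    exact hinc i (by omega)
  have hdropD : ∀ k, j ≤ k → (d.drop k).Chain' (· > ·) := by
    intro k hk
    apply chain'_of_getD
    intro i hi
    simp only [List.length_drop] at hi
    rw [getD_drop, getD_drop]
    have := hdec (k + i) (by omega) (by omega)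
    have he : k + (i + 1) = (k + i) + 1 := by omega
    rw [he]
    exact this
  have hdrop1 : (d.drop (j+1)).Chain' (· > ·) := hdropD (j+1) (by omega)
  have hdrop0 : (d.drop j).Chain' (· > ·) := hdropD j (le_refl j)
  have hrun : runLen d = j + 1 := by
    rcases Nat.lt_or_ge (j+1) d.length with hl | hl
    · have := runLen_append' (d.take (j+1)) (d.drop (j+1)) htake1
        (by intro h0; rw [h0] at hlt1; simp at hlt1)
        (by intro h0
            have := congrArg List.length h0
            simp at this; omega)
        (by rw [hlt1, getD_take (by omega), getD_drop]
            simp only [Nat.add_sub_cancel, Nat.add_zero]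
            exact not_lt.2 (le_of_lt (hdec j (le_refl j) (by omega))))
      rwa [List.take_append_drop, hlt1] at this
    · have hdl2 : d.length = j + 1 := by omega
      have : d.take (j+1) = d := List.take_of_length_le (by omega)
      rw [this] at htake1
      rw [runLen_eq_length d htake1, hdl2]
  refine ⟨j, hrun, hj, ?_, ?_⟩
  · obtain ⟨f1, f2, f3, f4⟩ := mkPair_facts hpos htake1 hdrop1
    refine ⟨f1, f2, f3, f4, ?_⟩
    rw [mk1_max htake1 (by omega) (by omega)]
    simp only [Nat.add_sub_cancel]
    rcases Nat.lt_or_ge (j+1) d.length with hl | hl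
    · rw [mk2_max hdrop1 hl]
      exact WithBot.coe_lt_coe.2 (hdec j (le_refl j) (by omega))
    · rw [mk2_max0 hl]
      exact WithBot.bot_lt_coe _
  · obtain ⟨f1, f2, f3, f4⟩ := mkPair_facts hpos htake0 hdrop0
    refine ⟨f1, f2, f3, f4, ?_⟩
    rw [mk2_max hdrop0 (by omega)]
    rcases Nat.eq_zero_or_pos j with rfl | hjpos
    · rw [mk1_max0]
      exact WithBot.bot_lt_coe _
    · rw [mk1_max htake0 (by omega) (by omega)]
      have := hinc (j-1) (by omega)
      have he : (j - 1) + 1 = j := by omega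
      rw [he] at this
      exact WithBot.coe_lt_coe.2 this

lemma max_some (s : Finset ℕ) (hs : s.Nonempty) :
    s.max = some ((s.sort (· ≤ ·)).getD ((s.sort (· ≤ ·)).length - 1) 0) := by
  rw [max_eq_getLast?, getLast?_eq_getD (sort_ne_nil hs)]

lemma rev_sort_ne_nil {t : Finset ℕ} (ht : t.Nonempty) : (t.sort (· ≤ ·)).reverse ≠ [] := by
  simpa using sort_ne_nil ht

lemma max_some_rev (t : Finset ℕ) (ht : t.Nonempty) :
    t.max = some (((t.sort (· ≤ ·)).reverse).getD 0 0) := by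
  rw [max_eq_getLast?, ← List.head?_reverse, head?_eq_getD (rev_sort_ne_nil ht)]

lemma sort_pos {s : Finset ℕ} (h : StrictPartition s) :
    ∀ x ∈ s.sort (· ≤ ·), 0 < x := fun x hx =>
  Nat.pos_of_ne_zero fun h0 => h (h0 ▸ (Finset.mem_sort _).1 hx)

lemma rev_sort_pos {s : Finset ℕ} (h : StrictPartition s) :
    ∀ x ∈ (s.sort (· ≤ ·)).reverse, 0 < x := fun x hx =>
  sort_pos h x (List.mem_reverse.1 hx)

lemma phi_type2 {s t : Finset ℕ} (h1 : StrictPartition s) (h2 : StrictPartition t)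
    (hs : s.Nonempty) (ht : t.Nonempty) (hmax : s.max = t.max) : Type2 (Phi (s, t)) := by
  have hbrev : ((t.sort (· ≤ ·)).reverse).Chain' (· > ·) := by
    rw [List.Chain', List.isChain_reverse]
    exact sort_chain' t
  apply type2_glue (sort_chain' s) hbrev
    (sort_ne_nil hs) (rev_sort_ne_nil ht) (sort_pos h1) (rev_sort_pos h2)
  have := (max_some s hs).symm.trans (hmax.trans (max_some_rev t ht))
  exact Option.some_injective _ this

lemma phi_type1_left {s t : Finset ℕ} (h1 : StrictPartition s) (h2 : StrictPartition t)
    (hs : s.Nonempty) (hlt : t.max < s.max) : Type1 (Phi (s, t)) := by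
  apply type1_glue_left (sort_chain' s) ?_ (sort_ne_nil hs) (sort_pos h1) (rev_sort_pos h2) ?_
  · rw [List.Chain', List.isChain_reverse]
    exact sort_chain' t
  · intro hbne
    have ht : t.Nonempty := by
      rw [Finset.nonempty_iff_ne_empty]
      intro h0
      exact hbne (by simp [h0])
    rw [max_some s hs, max_some_rev t ht] at hlt
    exact WithBot.coe_lt_coe.1 hlt

lemma phi_type1_right {s t : Finset ℕ} (h1 : StrictPartition s) (h2 : StrictPartition t)
    (ht : t.Nonempty) (hlt : s.max < t.max) : Type1 (Phi (s, t)) := by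
  apply type1_glue_right (sort_chain' s) ?_ (rev_sort_ne_nil ht) (sort_pos h1) (rev_sort_pos h2) ?_
  · rw [List.Chain', List.isChain_reverse]
    exact sort_chain' t
  · intro hane
    have hs : s.Nonempty := by
      rw [Finset.nonempty_iff_ne_empty]
      intro h0
      exact hane (by simp [h0])
    rw [max_some s hs, max_some_rev t ht] at hlt
    exact WithBot.coe_lt_coe.1 hlt

lemma mkPair_Phi (s t : Finset ℕ) :
    mkPair (Phi (s, t)) (s.sort (· ≤ ·)).length = (s, t) := by
  unfold mkPair Phi
  rw [List.take_left, List.drop_left, List.reverse_reverse]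
  simp only [Finset.sort_toFinset]

lemma runLen_Phi_eq {s t : Finset ℕ} (hs : s.Nonempty) (hle : t.max ≤ s.max) :
    runLen (Phi (s, t)) = (s.sort (· ≤ ·)).length := by
  rcases t.eq_empty_or_nonempty with rfl | ht
  · show runLen (s.sort (· ≤ ·) ++ (Finset.sort ∅ (· ≤ ·)).reverse) = _
    rw [Finset.sort_empty]
    simp only [List.reverse_nil, List.append_nil]
    exact runLen_eq_length _ (sort_chain' s)
  · apply runLen_append' _ _ (sort_chain' s) (sort_ne_nil hs) (rev_sort_ne_nil ht)
    rw [max_some s hs, max_some_rev t ht] at hle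
    exact not_lt.2 (WithBot.coe_le_coe.1 hle)

lemma runLen_Phi_lt {s t : Finset ℕ} (ht : t.Nonempty) (hlt : s.max < t.max) :
    runLen (Phi (s, t)) = (s.sort (· ≤ ·)).length + 1 := by
  set a := s.sort (· ≤ ·) with ha
  set bl := t.sort (· ≤ ·) with hbl
  have hrev : bl.reverse ≠ [] := rev_sort_ne_nil ht
  obtain ⟨m, t', hmt⟩ : ∃ m t', bl.reverse = m :: t' := by
    cases hbr : bl.reverse with
    | nil => exact absurd hbr hrev
    | cons m t' => exact ⟨m, t', rfl⟩
  have hrevchain : (bl.reverse).Chain' (· > ·) := by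
    rw [List.Chain', List.isChain_reverse]
    exact sort_chain' t
  have hmmax : t.max = some m := by
    rw [max_some_rev t ht, hmt]
    rfl
  have hchain' : (a ++ [m]).Chain' (· < ·) := by
    rw [List.Chain', List.isChain_append]
    refine ⟨sort_chain' s, List.isChain_singleton m, ?_⟩
    intro x hx y hy
    simp only [List.head?_cons, Option.mem_def, Option.some.injEq] at hy
    subst hy
    have hsne : s.Nonempty := by
      rw [Finset.nonempty_iff_ne_empty]
      intro h0
      subst h0
      rw [ha] at hx
      simp [Finset.sort_empty] at hx
    rw [max_some s hsne, hmmax] at hlt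
    rw [getLast?_eq_getD (sort_ne_nil hsne), Option.mem_def] at hx
    injection hx with hx
    rw [← hx]
    exact WithBot.coe_lt_coe.1 hlt
  have hassoc : Phi (s, t) = (a ++ [m]) ++ t' := by
    show a ++ bl.reverse = _
    rw [hmt, List.append_assoc]
    rfl
  have hlen : (a ++ [m]).length = a.length + 1 := by simp
  rw [hassoc]
  cases ht' : t' with
  | nil =>
      subst ht'
      rw [List.append_nil, runLen_eq_length _ hchain', hlen]
  | cons y t'' =>
      subst ht'
      rw [runLen_append (a ++ [m]) y t'' hchain' (by simp) ?_, hlen]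
      rw [List.getLast_concat]
      rw [hmt] at hrevchain
      have := (List.isChain_cons_cons.1 hrevchain).1
      exact not_lt.2 (le_of_lt this)

lemma mem_le_of_sum {s t : Finset ℕ} {n : ℕ} (hsum : s.sum id + t.sum id = n) {x : ℕ}
    (hx : x ∈ s ∨ x ∈ t) : x ≤ n := by
  rcases hx with hx | hx
  · have h' : x ≤ s.sum id :=
      Finset.single_le_sum (f := (id : ℕ → ℕ)) (fun i _ => Nat.zero_le _) hx
    omega
  · have h' : x ≤ t.sum id :=
      Finset.single_le_sum (f := (id : ℕ → ℕ)) (fun i _ => Nat.zero_le _) hx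
    omega

lemma finite_PA (n : ℕ) : Finite {p : Finset ℕ × Finset ℕ //
    StrictPartition p.1 ∧ StrictPartition p.2 ∧ p.1.sum id + p.2.sum id = n} := by
  classical
  apply Finite.of_injective (β := (Fin (n+1) → Bool) × (Fin (n+1) → Bool))
    (f := fun q => (fun i => decide ((i : ℕ) ∈ q.1.1), fun i => decide ((i : ℕ) ∈ q.1.2)))
  intro q q' h
  have h1 := congrFun (congrArg Prod.fst h)
  have h2 := congrFun (congrArg Prod.snd h)
  apply Subtype.ext
  have key : ∀ (u v : Finset ℕ), (∀ i : Fin (n+1), ((i : ℕ) ∈ u) = ((i : ℕ) ∈ v)) →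
      (∀ x ∈ u, x ≤ n) → (∀ x ∈ v, x ≤ n) → u = v := by
    intro u v hiff hu hv
    apply Finset.ext
    intro x
    rcases le_or_gt x n with hx | hx
    · have := hiff ⟨x, by omega⟩
      simp only [eq_iff_iff] at this
      exact this
    · constructor
      · intro hm; exact absurd (hu x hm) (by omega)
      · intro hm; exact absurd (hv x hm) (by omega)
  apply Prod.ext
  · apply key
    · intro i
      have := h1 i
      simpa using this
    · exact fun x hx => mem_le_of_sum q.2.2.2 (Or.inl hx)
    · exact fun x hx => mem_le_of_sum q'.2.2.2 (Or.inl hx)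
  · apply key
    · intro i
      have := h2 i
      simpa using this
    · exact fun x hx => mem_le_of_sum q.2.2.2 (Or.inr hx)
    · exact fun x hx => mem_le_of_sum q'.2.2.2 (Or.inr hx)

lemma pair_nonempty {s t : Finset ℕ} {n : ℕ} (hn : 1 ≤ n)
    (hsum : s.sum id + t.sum id = n) (hmax : s.max = t.max) :
    s.Nonempty ∧ t.Nonempty := by
  have hs : s.Nonempty := by
    rw [Finset.nonempty_iff_ne_empty]
    intro h0
    subst h0
    have ht0 : t = ∅ := Finset.max_eq_bot.1 (hmax.symm.trans Finset.max_empty)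
    subst ht0
    simp at hsum
    omega
  refine ⟨hs, ?_⟩
  rw [Finset.nonempty_iff_ne_empty]
  intro h0
  subst h0
  rw [Finset.max_empty] at hmax
  have := Finset.max_eq_bot.1 hmax
  subst this
  simp at hsum
  omega

lemma card_T2_eq (n : ℕ) (hn : 1 ≤ n) :
    Nat.card {p : Finset ℕ × Finset ℕ // StrictPartition p.1 ∧ StrictPartition p.2 ∧
      p.1.sum id + p.2.sum id = n ∧ p.1.max = p.2.max} =
    Nat.card {d : List ℕ // Type2 d ∧ d.sum = n} := by
  apply Nat.card_eq_of_bijective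
    (f := fun q => ⟨Phi q.1, by
      obtain ⟨⟨s, t⟩, h1, h2, hsum, hmax⟩ := q
      obtain ⟨hs, ht⟩ := pair_nonempty hn hsum hmax
      exact phi_type2 h1 h2 hs ht hmax, by
      obtain ⟨⟨s, t⟩, h1, h2, hsum, hmax⟩ := q
      rw [sum_Phi]
      exact hsum⟩)
  constructor
  · rintro ⟨⟨s, t⟩, h1, h2, hsum, hmax⟩ ⟨⟨s', t'⟩, h1', h2', hsum', hmax'⟩ hEq
    have hd : Phi (s, t) = Phi (s', t') := congrArg Subtype.val hEq
    obtain ⟨hs, ht⟩ := pair_nonempty hn hsum hmax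
    obtain ⟨hs', ht'⟩ := pair_nonempty hn hsum' hmax'
    have r1 : runLen (Phi (s, t)) = (s.sort (· ≤ ·)).length :=
      runLen_Phi_eq hs (le_of_eq hmax.symm)
    have r2 : runLen (Phi (s', t')) = (s'.sort (· ≤ ·)).length :=
      runLen_Phi_eq hs' (le_of_eq hmax'.symm)
    have : (s, t) = (s', t') := by
      rw [← mkPair_Phi s t, ← mkPair_Phi s' t', ← r1, ← r2, hd]
    apply Subtype.ext
    exact this
  · rintro ⟨d, h2, hsum⟩
    obtain ⟨f1, f2, f3, f4, f5⟩ := type2_mk h2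
    refine ⟨⟨mkPair d (runLen d), f1, f2, by rw [f3, hsum], f5⟩, ?_⟩
    apply Subtype.ext
    exact f4

lemma card_PNE (n : ℕ) :
    Nat.card {p : Finset ℕ × Finset ℕ // StrictPartition p.1 ∧ StrictPartition p.2 ∧
      p.1.sum id + p.2.sum id = n ∧ p.1.max ≠ p.2.max} =
    2 * Nat.card {d : List ℕ // Type1 d ∧ d.sum = n} := by
  have hbij : Function.Bijective
      (fun x : Bool × {d : List ℕ // Type1 d ∧ d.sum = n} =>
        (⟨mkPair x.2.1 (cond x.1 (runLen x.2.1) (runLen x.2.1 - 1)), by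
          obtain ⟨b, d, h1, hsum⟩ := x
          obtain ⟨j, hrun, hj, ⟨g1, g2, g3, g4, g5⟩, ⟨f1, f2, f3, f4, f5⟩⟩ := type1_mk h1
          cases b with
          | true =>
              simp only [Bool.cond_true, hrun]
              exact ⟨g1, g2, by rw [g3, hsum], ne_of_gt g5⟩
          | false =>
              simp only [Bool.cond_false, hrun, Nat.add_sub_cancel]
              exact ⟨f1, f2, by rw [f3, hsum], ne_of_lt f5⟩⟩ :
            {p : Finset ℕ × Finset ℕ // StrictPartition p.1 ∧ StrictPartition p.2 ∧
              p.1.sum id + p.2.sum id = n ∧ p.1.max ≠ p.2.max})) := by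
    constructor
    · rintro ⟨b, d, h1, hsum⟩ ⟨b', d', h1', hsum'⟩ hEq
      obtain ⟨j, hrun, hj, ⟨g1, g2, g3, g4, g5⟩, ⟨f1, f2, f3, f4, f5⟩⟩ := type1_mk h1
      obtain ⟨j', hrun', hj', ⟨g1', g2', g3', g4', g5'⟩, ⟨f1', f2', f3', f4', f5'⟩⟩ := type1_mk h1'
      have hval : mkPair d (cond b (runLen d) (runLen d - 1))
          = mkPair d' (cond b' (runLen d') (runLen d' - 1)) :=
        congrArg Subtype.val hEq
      have hbb : b = b' := by
        cases b <;> cases b' <;> try rfl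
        · exfalso
          simp only [Bool.cond_false, Bool.cond_true, hrun, hrun', Nat.add_sub_cancel] at hval
          rw [hval] at f5
          exact lt_asymm f5 g5'
        · exfalso
          simp only [Bool.cond_false, Bool.cond_true, hrun, hrun', Nat.add_sub_cancel] at hval
          rw [hval] at g5
          exact lt_asymm g5 f5'
      subst hbb
      have hdd : d = d' := by
        cases b with
        | true =>
            simp only [Bool.cond_true, hrun, hrun'] at hval
            rw [← g4, ← g4', hval]
        | false =>
            simp only [Bool.cond_false, hrun, hrun', Nat.add_sub_cancel] at hval
            rw [← f4, ← f4', hval]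
      subst hdd
      rfl
    · rintro ⟨⟨s, t⟩, h1, h2, hsum, hne⟩
      rcases lt_trichotomy s.max t.max with hlt | heq | hgt
      · have ht : t.Nonempty := by
          rw [Finset.nonempty_iff_ne_empty]
          intro h0
          subst h0
          rw [Finset.max_empty] at hlt
          exact not_lt_bot hlt
        have htyp : Type1 (Phi (s, t)) := phi_type1_right h1 h2 ht hlt
        have hsump : (Phi (s, t)).sum = n := by rw [sum_Phi]; exact hsum
        refine ⟨(false, ⟨Phi (s, t), htyp, hsump⟩), ?_⟩
        apply Subtype.ext
        show mkPair (Phi (s, t)) (cond false _ (runLen (Phi (s, t)) - 1)) = (s, t)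
        rw [Bool.cond_false, runLen_Phi_lt ht hlt, Nat.add_sub_cancel, mkPair_Phi]
      · exact absurd heq hne
      · have hs : s.Nonempty := by
          rw [Finset.nonempty_iff_ne_empty]
          intro h0
          subst h0
          rw [Finset.max_empty] at hgt
          exact not_lt_bot hgt
        have htyp : Type1 (Phi (s, t)) := phi_type1_left h1 h2 hs hgt
        have hsump : (Phi (s, t)).sum = n := by rw [sum_Phi]; exact hsum
        refine ⟨(true, ⟨Phi (s, t), htyp, hsump⟩), ?_⟩
        apply Subtype.ext
        show mkPair (Phi (s, t)) (cond true (runLen (Phi (s, t))) _) = (s, t)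
        rw [Bool.cond_true, runLen_Phi_eq hs (le_of_lt hgt), mkPair_Phi]
  have := Nat.card_eq_of_bijective _ hbij
  rw [← this, Nat.card_prod]
  simp [Nat.card_eq_fintype_card]

end S16

/-- For `n ≥ 1`: Type 2 sequences of weight `n` are counted by pairs of strict partitions
of total weight `n` with equal maxima, and `ũ(n) = 2·#Type1 + #Type2`. -/
theorem stmt16 (n : ℕ) (hn : 1 ≤ n) :
    Nat.card {d : List ℕ // Type2 d ∧ d.sum = n} =
      Nat.card {p : Finset ℕ × Finset ℕ //
        StrictPartition p.1 ∧ StrictPartition p.2 ∧ p.1.sum id + p.2.sum id = n ∧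
        p.1.max = p.2.max} ∧
    utilde n = 2 * Nat.card {d : List ℕ // Type1 d ∧ d.sum = n}
                 + Nat.card {d : List ℕ // Type2 d ∧ d.sum = n} := by
  classical
  refine ⟨(S16.card_T2_eq n hn).symm, ?_⟩
  rw [utilde]
  haveI : Finite {p : Finset ℕ × Finset ℕ //
      StrictPartition p.1 ∧ StrictPartition p.2 ∧ p.1.sum id + p.2.sum id = n} :=
    S16.finite_PA n
  have e : {p : Finset ℕ × Finset ℕ //
      StrictPartition p.1 ∧ StrictPartition p.2 ∧ p.1.sum id + p.2.sum id = n} ≃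
    {q : {p : Finset ℕ × Finset ℕ //
      StrictPartition p.1 ∧ StrictPartition p.2 ∧ p.1.sum id + p.2.sum id = n} //
        q.1.1.max = q.1.2.max} ⊕
    {q : {p : Finset ℕ × Finset ℕ //
      StrictPartition p.1 ∧ StrictPartition p.2 ∧ p.1.sum id + p.2.sum id = n} //
        ¬ q.1.1.max = q.1.2.max} :=
    (Equiv.sumCompl _).symm
  rw [Nat.card_congr e, Nat.card_sum]
  have e2 : {q : {p : Finset ℕ × Finset ℕ //
      StrictPartition p.1 ∧ StrictPartition p.2 ∧ p.1.sum id + p.2.sum id = n} //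
        q.1.1.max = q.1.2.max} ≃
      {p : Finset ℕ × Finset ℕ // StrictPartition p.1 ∧ StrictPartition p.2 ∧
        p.1.sum id + p.2.sum id = n ∧ p.1.max = p.2.max} :=
    (Equiv.subtypeSubtypeEquivSubtypeInter
      (fun p : Finset ℕ × Finset ℕ =>
        StrictPartition p.1 ∧ StrictPartition p.2 ∧ p.1.sum id + p.2.sum id = n)
      (fun p => p.1.max = p.2.max)).trans
      (Equiv.subtypeEquivRight (fun p => by tauto))
  have e3 : {q : {p : Finset ℕ × Finset ℕ //
      StrictPartition p.1 ∧ StrictPartition p.2 ∧ p.1.sum id + p.2.sum id = n} //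
        ¬ q.1.1.max = q.1.2.max} ≃
      {p : Finset ℕ × Finset ℕ // StrictPartition p.1 ∧ StrictPartition p.2 ∧
        p.1.sum id + p.2.sum id = n ∧ p.1.max ≠ p.2.max} :=
    (Equiv.subtypeSubtypeEquivSubtypeInter
      (fun p : Finset ℕ × Finset ℕ =>
        StrictPartition p.1 ∧ StrictPartition p.2 ∧ p.1.sum id + p.2.sum id = n)
      (fun p => ¬ p.1.max = p.2.max)).trans
      (Equiv.subtypeEquivRight (fun p => by tauto))
  rw [Nat.card_congr e2, Nat.card_congr e3, S16.card_PNE n, ← S16.card_T2_eq n hn]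
  omega
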